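/- Let n ≥ 2 and let v be a C¹ function defined in a neighborhood of 0 in closure(ℝⁿ₊) with tangential gradient q := ∇_T v(0) = (∂₁v(0), …, ∂_{n−1}v(0)) ≠ 0. For any λ ∈ ℝ \ {0} and any O′ ∈ O(n−1), set O := diag(O′, 1) and x̄ := (λ²/2)·Oᵀ·(qᵀ, 0)ᵀ (a nonzero point of ∂ℝⁿ₊), and define ψ(x) := O·( λ²(x − x̄)/|x − x̄|² + λ²·x̄/|x̄|² ). Then ψ(0) = 0, ψ maps ℝⁿ₊ onto ℝⁿ₊, and the transformed function v^ψ(x) := v(ψ(x)) + (1/n)·log|det Dψ(x)| satisfies ∇_T v^ψ(0) = 0. -/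

import Mathlib

noncomputable section

open Filter Metric Polynomial MeasureTheory
open scoped Topology

namespace CLL

abbrev E (d : ℕ) := EuclideanSpace ℝ (Fin d)

/-- One-sided partial derivative (within a set `s`) in the `i`-th coordinate direction. -/
def pd (d : ℕ) (s : Set (E d)) (v : E d → ℝ) (i : Fin d) (x : E d) : ℝ :=
  fderivWithin ℝ v s x (EuclideanSpace.single i 1)

/-- The Möbius Hessian `A[v] = e^{-2v} (-∇² v + ∇v ⊗ ∇v - |∇v|²/2 · I)`,
computed with derivatives within `s`. -/
def mHess (d : ℕ) (s : Set (E d)) (v : E d → ℝ) (x : E d) : Matrix (Fin d) (Fin d) ℝ :=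
  fun i j =>
    Real.exp (-2 * v x) *
      (-(pd d s (fun y => pd d s v j y) i x)
        + pd d s v i x * pd d s v j x
        - (1 / 2) * (∑ k, (pd d s v k x) ^ 2) * (if i = j then (1 : ℝ) else 0))

/-- `μ` lists the eigenvalues (with multiplicity, in some order) of the matrix `M`. -/
def IsEigList (d : ℕ) (M : Matrix (Fin d) (Fin d) ℝ) (μ : Fin d → ℝ) : Prop :=
  M.charpoly = ∏ i, (X - C (μ i))

/-- `λ* = (1, -1, …, -1)`. -/
def lamStar (d : ℕ) : Fin d → ℝ := fun i => if (i : ℕ) = 0 then 1 else -1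

/-- Condition (C): `Γ ⊊ ℝⁿ` is a nonempty open symmetric cone with vertex at the origin
satisfying `Γ + Γₙ ⊆ Γ`. -/
def CondC (d : ℕ) (Γ : Set (Fin d → ℝ)) : Prop :=
  Γ.Nonempty ∧ Γ ≠ Set.univ ∧ IsOpen Γ ∧
    (∀ t : ℝ, 0 < t → ∀ lam ∈ Γ, t • lam ∈ Γ) ∧
    (∀ σ : Equiv.Perm (Fin d), ∀ lam ∈ Γ, lam ∘ σ ∈ Γ) ∧
    (∀ lam ∈ Γ, ∀ μ : Fin d → ℝ, (∀ i, 0 < μ i) → lam + μ ∈ Γ)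

/-- Condition (F): `f` is symmetric on `Γ`, locally Lipschitz, and for each compact
`K ⊆ Γ` its partial derivatives are bounded below a.e. on `K` by a positive constant. -/
def CondF (d : ℕ) (Γ : Set (Fin d → ℝ)) (f : (Fin d → ℝ) → ℝ) : Prop :=
  (∀ σ : Equiv.Perm (Fin d), ∀ lam ∈ Γ, f (lam ∘ σ) = f lam) ∧
  (∀ lam ∈ Γ, ∃ K : NNReal, ∃ t ∈ nhdsWithin lam Γ, LipschitzOnWith K f t) ∧
  (∀ K : Set (Fin d → ℝ), K ⊆ Γ → IsCompact K →
    ∃ c > (0 : ℝ), ∀ᵐ lam ∂(volume.restrict K),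
      ∀ i : Fin d, c ≤ lineDeriv ℝ f lam (Pi.single i 1))

/-- The index of the last coordinate. -/
def lastIdx (n : ℕ) : Fin (n + 2) := Fin.last (n + 1)

/-- The open upper half space `ℝⁿ₊`. -/
def upperH (n : ℕ) : Set (E (n + 2)) := {x | 0 < x (lastIdx n)}

/-- The standard bubble `log (a / (1 + b |x - x̄|²))`. -/
def bubble (n : ℕ) (a b : ℝ) (xbar : E (n + 2)) (x : E (n + 2)) : ℝ :=
  Real.log (a / (1 + b * ‖x - xbar‖ ^ 2))

/-- The open upper half ball `B_r⁺`. -/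
def Bplus (n : ℕ) (r : ℝ) : Set (E (n + 2)) := Metric.ball 0 r ∩ upperH n

/-- The set defining `μ_Γ⁻`. -/
def muSet (d : ℕ) (Γ : Set (Fin d → ℝ)) : Set ℝ :=
  {c : ℝ | (fun i : Fin d => if (i : ℕ) = 0 then c else -1) ∈ closure Γ}

/-- `μ_Γ⁻ = inf { c : (c,-1,…,-1) ∈ closure Γ }`. -/
def muMinus (d : ℕ) (Γ : Set (Fin d → ℝ)) : ℝ :=
  sInf (muSet d Γ)

end CLL

namespace CLLaux

theorem clm_eval_sum (m : ℕ) (L : EuclideanSpace ℝ (Fin m) →L[ℝ] ℝ)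
    (y : EuclideanSpace ℝ (Fin m)) :
    L y = ∑ k, y k * L (EuclideanSpace.single k 1) := by
  have hy : y = ∑ k, y k • EuclideanSpace.single k 1 := by
    ext j
    simp [EuclideanSpace.single_apply, Pi.single_apply]
  conv_lhs => rw [hy]
  simp [smul_eq_mul]

theorem reflection_hyperplane (m : ℕ) (w u : EuclideanSpace ℝ (Fin m)) :
    (Submodule.reflection (ℝ ∙ w)ᗮ u : EuclideanSpace ℝ (Fin m))
      = u - ((2 * inner ℝ w u / ‖w‖ ^ 2 : ℝ) • w) := by
  rw [Submodule.reflection_apply, Submodule.starProjection_orthogonal_val,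
    Submodule.starProjection_singleton]
  simp only [RCLike.ofReal_real_eq_id, id_eq]
  module

theorem det_comp_refl (m : ℕ) (O : Matrix (Fin m) (Fin m) ℝ) (hdet : O.det = 1 ∨ O.det = -1)
    (s : ℝ) (w : EuclideanSpace ℝ (Fin m)) :
    |LinearMap.det (((LinearMap.toContinuousLinearMap (Matrix.toEuclideanLin O)).comp
      (s • (Submodule.reflection (ℝ ∙ w)ᗮ :
        EuclideanSpace ℝ (Fin m) →L[ℝ] EuclideanSpace ℝ (Fin m)))).toLinearMap)|
      = |s| ^ m := by
  have hT : LinearMap.det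
      (LinearMap.toContinuousLinearMap (Matrix.toEuclideanLin O)).toLinearMap = O.det := by
    rw [LinearMap.coe_toContinuousLinearMap, Matrix.toEuclideanLin_eq_toLin, LinearMap.det_toLin]
  set R : EuclideanSpace ℝ (Fin m) →L[ℝ] EuclideanSpace ℝ (Fin m) :=
    (Submodule.reflection (ℝ ∙ w)ᗮ : EuclideanSpace ℝ (Fin m) →L[ℝ] EuclideanSpace ℝ (Fin m))
  have hRR : R.toLinearMap ∘ₗ R.toLinearMap = LinearMap.id := by
    ext x
    simp [R, Submodule.reflection_reflection]
  have hr : LinearMap.det R.toLinearMap * LinearMap.det R.toLinearMap = 1 := by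
    rw [← LinearMap.det_comp, hRR, LinearMap.det_id]
  have hr' : |LinearMap.det R.toLinearMap| = 1 := by
    rcases mul_self_eq_one_iff.1 hr with h | h <;> rw [h] <;> norm_num
  rw [ContinuousLinearMap.toLinearMap_comp, LinearMap.det_comp, hT, ContinuousLinearMap.toLinearMap_smul,
    LinearMap.det_smul]
  simp only [finrank_euclideanSpace_fin]
  rw [abs_mul, abs_mul, abs_pow, hr']
  rcases hdet with h | h <;> rw [h] <;> norm_num

theorem sum_sq_orth (m : ℕ) (A : Matrix (Fin m) (Fin m) ℝ)
    (hA : ∀ j l, ∑ i, A j i * A l i = if j = l then 1 else 0) (q : Fin m → ℝ) :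
    ∑ i, (∑ j, A j i * q j) ^ 2 = ∑ j, q j ^ 2 := by
  have key : ∀ j l, ∑ i, (A j i * q j) * (A l i * q l)
      = q j * q l * (if j = l then 1 else 0) := by
    intro j l
    rw [← hA j l, Finset.mul_sum]
    exact Finset.sum_congr rfl fun i _ => by ring
  calc ∑ i, (∑ j, A j i * q j) ^ 2
      = ∑ i, ∑ j, ∑ l, (A j i * q j) * (A l i * q l) := by
        simp_rw [sq, Finset.sum_mul_sum]
    _ = ∑ j, ∑ i, ∑ l, (A j i * q j) * (A l i * q l) := Finset.sum_comm
    _ = ∑ j, ∑ l, ∑ i, (A j i * q j) * (A l i * q l) :=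
        Finset.sum_congr rfl fun j _ => Finset.sum_comm
    _ = ∑ j, ∑ l, q j * q l * (if j = l then 1 else 0) :=
        Finset.sum_congr rfl fun j _ => Finset.sum_congr rfl fun l _ => key j l
    _ = ∑ j, q j ^ 2 := by
        refine Finset.sum_congr rfl fun j _ => ?_
        simp [Finset.sum_ite_eq, sq]

theorem sum_orth_vec (m : ℕ) (A : Matrix (Fin m) (Fin m) ℝ)
    (hA : ∀ i k, ∑ j, A i j * A k j = if i = k then 1 else 0) (y : Fin m → ℝ) (i : Fin m) :
    ∑ j, A i j * ∑ k, A k j * y k = y i := by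
  calc ∑ j, A i j * ∑ k, A k j * y k
      = ∑ j, ∑ k, A i j * (A k j * y k) := by simp_rw [Finset.mul_sum]
    _ = ∑ k, ∑ j, A i j * (A k j * y k) := Finset.sum_comm
    _ = ∑ k, y k * ∑ j, A i j * A k j := by
        refine Finset.sum_congr rfl fun k _ => ?_
        rw [Finset.mul_sum]
        exact Finset.sum_congr rfl fun j _ => by ring
    _ = y i := by simp [hA, Finset.sum_ite_eq]




variable (n : ℕ) (O' : Matrix (Fin (n + 1)) (Fin (n + 1)) ℝ)

def OOaux : Matrix (Fin (n + 2)) (Fin (n + 2)) ℝ :=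
  Matrix.reindex (finSumFinEquiv : Fin (n + 1) ⊕ Fin 1 ≃ Fin (n + 2))
    (finSumFinEquiv : Fin (n + 1) ⊕ Fin 1 ≃ Fin (n + 2))
    (Matrix.fromBlocks O' 0 0 (1 : Matrix (Fin 1) (Fin 1) ℝ))

theorem OO_last_row (j : Fin (n+2)) :
    OOaux n O' (Fin.last (n+1)) j = if j = Fin.last (n+1) then 1 else 0 := by
  induction j using Fin.lastCases with
  | last => simp [OOaux, finSumFinEquiv_symm_last]
  | cast j =>
      have hne : (Fin.castSucc j : Fin (n+2)) ≠ Fin.last (n+1) := (Fin.castSucc_lt_last j).ne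
      have hc : (finSumFinEquiv : Fin (n + 1) ⊕ Fin 1 ≃ Fin (n + 2)).symm j.castSucc = Sum.inl j :=
        finSumFinEquiv_symm_apply_castAdd j
      simp [OOaux, finSumFinEquiv_symm_last, hc, hne]

theorem OO_last_col (i : Fin (n+2)) :
    OOaux n O' i (Fin.last (n+1)) = if i = Fin.last (n+1) then 1 else 0 := by
  induction i using Fin.lastCases with
  | last => simp [OOaux, finSumFinEquiv_symm_last]
  | cast i =>
      have hne : (Fin.castSucc i : Fin (n+2)) ≠ Fin.last (n+1) := (Fin.castSucc_lt_last i).ne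
      have hc : (finSumFinEquiv : Fin (n + 1) ⊕ Fin 1 ≃ Fin (n + 2)).symm i.castSucc = Sum.inl i :=
        finSumFinEquiv_symm_apply_castAdd i
      simp [OOaux, finSumFinEquiv_symm_last, hc, hne]

theorem OO_orth (h : O' ∈ Matrix.orthogonalGroup (Fin (n + 1)) ℝ) :
    OOaux n O' ∈ Matrix.orthogonalGroup (Fin (n + 2)) ℝ := by
  rw [Matrix.mem_orthogonalGroup_iff] at h ⊢
  simp only [← Matrix.conjTranspose_eq_transpose_of_trivial, ← Matrix.star_eq_conjTranspose] at h ⊢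
  have h1 : OOaux n O' * star (OOaux n O') =
      Matrix.reindex finSumFinEquiv finSumFinEquiv
        (Matrix.fromBlocks O' 0 0 (1 : Matrix (Fin 1) (Fin 1) ℝ) *
          star (Matrix.fromBlocks O' 0 0 (1 : Matrix (Fin 1) (Fin 1) ℝ))) := by
    simp [OOaux, Matrix.reindex_apply, Matrix.submatrix_mul_equiv, Matrix.star_eq_conjTranspose,
      Matrix.conjTranspose_submatrix]
  rw [h1]
  have hb : star (Matrix.fromBlocks O' 0 0 (1 : Matrix (Fin 1) (Fin 1) ℝ)) =
      Matrix.fromBlocks (star O') 0 0 1 := by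
    rw [Matrix.star_eq_conjTranspose, Matrix.conjTranspose_eq_transpose_of_trivial,
      Matrix.fromBlocks_transpose, Matrix.transpose_one, Matrix.transpose_zero,
      Matrix.transpose_zero, show star O' = O'.transpose from
        Matrix.conjTranspose_eq_transpose_of_trivial O' ▸ rfl]
  rw [hb, Matrix.fromBlocks_multiply]
  simp only [Matrix.mul_zero, Matrix.zero_mul, Matrix.mul_one, Matrix.one_mul, add_zero,
    zero_add, h]
  simp [Matrix.fromBlocks_one]

theorem orth_row_sums {m : ℕ} {A : Matrix (Fin m) (Fin m) ℝ}
    (h : A ∈ Matrix.orthogonalGroup (Fin m) ℝ) (i k : Fin m) :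
    ∑ j, A i j * A k j = if i = k then 1 else 0 := by
  rw [Matrix.mem_orthogonalGroup_iff] at h
  have := congrArg (fun M => M i k) h
  simp only [Matrix.mul_apply, Matrix.transpose_apply, Matrix.star_apply, star_trivial] at this
  rw [this]
  simp [Matrix.one_apply]

theorem orth_col_sums {m : ℕ} {A : Matrix (Fin m) (Fin m) ℝ}
    (h : A ∈ Matrix.orthogonalGroup (Fin m) ℝ) (i k : Fin m) :
    ∑ j, A j i * A j k = if i = k then 1 else 0 := by
  rw [Matrix.mem_orthogonalGroup_iff'] at h
  have := congrArg (fun M => M i k) h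
  simp only [Matrix.mul_apply, Matrix.transpose_apply, Matrix.star_apply, star_trivial] at this
  rw [this]
  simp [Matrix.one_apply]

theorem orth_det {m : ℕ} {A : Matrix (Fin m) (Fin m) ℝ}
    (h : A ∈ Matrix.orthogonalGroup (Fin m) ℝ) : A.det = 1 ∨ A.det = -1 := by
  rw [Matrix.mem_orthogonalGroup_iff] at h
  have := congrArg Matrix.det h
  rw [Matrix.det_mul, Matrix.det_one, Matrix.det_transpose] at this
  exact mul_self_eq_one_iff.1 this

end CLLaux

open CLL

set_option maxHeartbeats 4000000

theorem CLLaux.closure_upperH (n : ℕ) :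
    closure (upperH n) = {x : E (n+2) | 0 ≤ x (lastIdx n)} := by
  apply Set.Subset.antisymm
  · have hc : IsClosed {x : E (n+2) | 0 ≤ x (lastIdx n)} :=
      isClosed_le continuous_const (EuclideanSpace.proj (lastIdx n)).continuous
    exact closure_minimal
      (fun x (hx : 0 < x (lastIdx n)) => (le_of_lt hx : (0:ℝ) ≤ x (lastIdx n))) hc
  · intro x hx
    have hcont : Continuous fun t : ℝ => x + t • EuclideanSpace.single (lastIdx n) (1:ℝ) := by
      continuity
    have h : Filter.Tendsto (fun t : ℝ => x + t • EuclideanSpace.single (lastIdx n) (1:ℝ))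
        (nhdsWithin 0 (Set.Ioi 0)) (nhds x) := by
      have h0 := (hcont.tendsto 0).mono_left
        (nhdsWithin_le_nhds (s := Set.Ioi (0:ℝ)))
      simpa using h0
    refine mem_closure_of_tendsto h ?_
    filter_upwards [self_mem_nhdsWithin] with t ht
    have happ : (x + t • EuclideanSpace.single (lastIdx n) (1:ℝ)) (lastIdx n)
        = x (lastIdx n) + t := by
      simp [EuclideanSpace.single_apply]
    simp only [upperH, Set.mem_setOf_eq, happ]
    have htpos : (0:ℝ) < t := ht
    have hx' : (0:ℝ) ≤ x (lastIdx n) := hx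
    linarith

theorem CLLaux.upperH_convex (n : ℕ) : Convex ℝ (upperH n) :=
  convex_halfSpace_gt
    (EuclideanSpace.proj (lastIdx n) : E (n+2) →L[ℝ] ℝ).toLinearMap.isLinear 0

theorem CLLaux.uniqueDiffOn_closure_upperH (n : ℕ) :
    UniqueDiffOn ℝ (closure (upperH n)) := by
  apply uniqueDiffOn_convex (CLLaux.upperH_convex n).closure
  have h1 : upperH n ⊆ interior (closure (upperH n)) := by
    apply interior_maximal subset_closure
    exact isOpen_lt continuous_const (EuclideanSpace.proj (lastIdx n)).continuous
  refine Set.Nonempty.mono h1 ⟨EuclideanSpace.single (lastIdx n) 1, ?_⟩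
  simp [upperH, EuclideanSpace.single_apply]

/-- Lemma 2.5 of the paper: normalizing the tangential gradient at a boundary point by a
Möbius transformation preserving the half space and the origin. -/
theorem stmt9 (n : ℕ) (v : E (n + 2) → ℝ) (ρ : ℝ) (hρ : 0 < ρ)
    (hv : ContDiffOn ℝ 1 v (closure (upperH n) ∩ Metric.ball 0 ρ))
    (hq : ∃ i : Fin (n + 1),
      pd (n + 2) (closure (upperH n) ∩ Metric.ball 0 ρ) v i.castSucc 0 ≠ 0)
    (lam : ℝ) (hlam : lam ≠ 0)
    (O' : Matrix (Fin (n + 1)) (Fin (n + 1)) ℝ)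
    (hO' : O' ∈ Matrix.orthogonalGroup (Fin (n + 1)) ℝ) :
    let S : Set (E (n + 2)) := closure (upperH n) ∩ Metric.ball 0 ρ
    let qe : Fin (n + 2) → ℝ := fun i =>
      if i = Fin.last (n + 1) then 0 else pd (n + 2) S v i 0
    let O : Matrix (Fin (n + 2)) (Fin (n + 2)) ℝ :=
      Matrix.reindex (finSumFinEquiv : Fin (n + 1) ⊕ Fin 1 ≃ Fin (n + 2))
        (finSumFinEquiv : Fin (n + 1) ⊕ Fin 1 ≃ Fin (n + 2))
        (Matrix.fromBlocks O' 0 0 (1 : Matrix (Fin 1) (Fin 1) ℝ))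
    let xbar : E (n + 2) := WithLp.toLp 2 (fun i => lam ^ 2 / 2 * ∑ j, O j i * qe j)
    let ψ : E (n + 2) → E (n + 2) := fun x => WithLp.toLp 2 (fun i =>
      ∑ j, O i j * (lam ^ 2 * (x j - xbar j) / ‖x - xbar‖ ^ 2
        + lam ^ 2 * xbar j / ‖xbar‖ ^ 2))
    let vψ : E (n + 2) → ℝ := fun x =>
      v (ψ x) + (1 / (n + 2 : ℝ)) *
        Real.log |LinearMap.det ((fderiv ℝ ψ x).toLinearMap)|
    xbar ≠ 0 ∧ xbar (Fin.last (n + 1)) = 0 ∧ ψ 0 = 0 ∧ ψ '' upperH n = upperH n ∧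
      ∀ i : Fin (n + 1),
        fderivWithin ℝ vψ (closure (upperH n)) 0 (EuclideanSpace.single i.castSucc 1) = 0 := by
  intro S qe O xbar ψ vψ
  set lst : Fin (n + 2) := Fin.last (n + 1) with hlst
  -- basic facts about O
  have hOrow : ∀ j, O lst j = if j = lst then 1 else 0 := CLLaux.OO_last_row n O'
  have hOcol : ∀ i, O i lst = if i = lst then 1 else 0 := CLLaux.OO_last_col n O'
  have hOmem : O ∈ Matrix.orthogonalGroup (Fin (n + 2)) ℝ := CLLaux.OO_orth n O' hO'
  have hOO : ∀ i k, ∑ j, O i j * O k j = if i = k then 1 else 0 := CLLaux.orth_row_sums hOmem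
  have hOTO : ∀ i k, ∑ j, O j i * O j k = if i = k then 1 else 0 := CLLaux.orth_col_sums hOmem
  have hOdet : O.det = 1 ∨ O.det = -1 := CLLaux.orth_det hOmem
  -- facts about qe
  have hqlast : qe lst = 0 := by simp [qe, hlst]
  have hQpos : (0:ℝ) < ∑ k, qe k ^ 2 := by
    obtain ⟨i, hi⟩ := hq
    have hqi : qe i.castSucc ≠ 0 := by
      have hne : (i.castSucc : Fin (n+2)) ≠ lst := (Fin.castSucc_lt_last i).ne
      simpa [qe, hne] using hi
    refine Finset.sum_pos' (fun k _ => sq_nonneg _) ⟨i.castSucc, Finset.mem_univ _, ?_⟩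
    positivity
  set Q : ℝ := ∑ k, qe k ^ 2 with hQdef
  have hQne : Q ≠ 0 := ne_of_gt hQpos
  have hlamsq : (0:ℝ) < lam ^ 2 := by positivity
  -- xbar facts
  have hxlast : xbar lst = 0 := by
    show lam ^ 2 / 2 * ∑ j, O j lst * qe j = 0
    have : ∑ j, O j lst * qe j = qe lst := by
      rw [Finset.sum_eq_single lst]
      · rw [hOcol, if_pos rfl, one_mul]
      · intro j _ hj
        rw [hOcol, if_neg hj, zero_mul]
      · intro h; exact absurd (Finset.mem_univ _) h
    rw [this, hqlast, mul_zero]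
  have hNval : ‖xbar‖ ^ 2 = lam ^ 4 * Q / 4 := by
    have hn : ‖xbar‖ ^ 2 = ∑ i, xbar i ^ 2 := by
      rw [EuclideanSpace.norm_eq, Real.sq_sqrt (by positivity)]
      exact Finset.sum_congr rfl fun i _ => by rw [Real.norm_eq_abs, sq_abs]
    rw [hn]
    have : ∀ i, xbar i = lam ^ 2 / 2 * ∑ j, O j i * qe j := fun i => rfl
    calc ∑ i, xbar i ^ 2 = ∑ i, (lam ^ 2 / 2) ^ 2 * (∑ j, O j i * qe j) ^ 2 := by
          refine Finset.sum_congr rfl fun i _ => ?_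
          rw [this i, mul_pow]
      _ = (lam ^ 2 / 2) ^ 2 * ∑ i, (∑ j, O j i * qe j) ^ 2 := by rw [← Finset.mul_sum]
      _ = (lam ^ 2 / 2) ^ 2 * Q := by rw [CLLaux.sum_sq_orth _ O hOO qe]
      _ = lam ^ 4 * Q / 4 := by ring
  have hNpos : (0:ℝ) < ‖xbar‖ ^ 2 := by
    rw [hNval]; positivity
  have hxbar0 : xbar ≠ 0 := by
    intro h
    rw [h] at hNpos
    simp at hNpos
  have h0ne : (0 : E (n+2)) ≠ xbar := fun h => hxbar0 h.symm
  set N : ℝ := ‖xbar‖ ^ 2 with hNdef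
  have hNne : N ≠ 0 := ne_of_gt hNpos
  -- the linear map T
  set T : E (n+2) →L[ℝ] E (n+2) :=
    LinearMap.toContinuousLinearMap (Matrix.toEuclideanLin O) with hTdef
  have hT : ∀ (y : E (n+2)) i, T y i = ∑ j, O i j * y j := by
    intro y i
    show Matrix.toEuclideanLin O y i = _
    rw [Matrix.toEuclideanLin_apply]
    rfl
  -- ψ as a composition
  set k0 : E (n+2) := (lam ^ 2 / ‖xbar‖ ^ 2) • xbar - xbar with hk0def
  have hψeq : ψ = fun x => T (EuclideanGeometry.inversion xbar |lam| x + k0) := by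
    funext x
    ext i
    show (∑ j, O i j * (lam ^ 2 * (x j - xbar j) / ‖x - xbar‖ ^ 2
        + lam ^ 2 * xbar j / ‖xbar‖ ^ 2)) = _
    rw [hT]
    refine Finset.sum_congr rfl fun j _ => ?_
    congr 1
    rw [EuclideanGeometry.inversion]
    simp only [vsub_eq_sub, vadd_eq_add, PiLp.add_apply, PiLp.sub_apply, PiLp.smul_apply,
      smul_eq_mul]
    rw [dist_eq_norm, div_pow, sq_abs, hk0def]
    simp only [PiLp.sub_apply, PiLp.smul_apply, smul_eq_mul]
    ring
  -- derivative of ψ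
  have hDψ : ∀ x : E (n+2), x ≠ xbar → HasFDerivAt ψ
      (T.comp (((|lam| / dist x xbar) ^ 2) •
        (Submodule.reflection (ℝ ∙ (x - xbar))ᗮ : E (n+2) →L[ℝ] E (n+2)))) x := by
    intro x hx
    rw [hψeq]
    exact T.hasFDerivAt.comp x
      ((EuclideanGeometry.hasFDerivAt_inversion hx).add_const k0)
  have hsub_ne : ∀ x : E (n+2), x ≠ xbar → ‖x - xbar‖ ^ 2 ≠ 0 := fun x hx =>
    pow_ne_zero 2 (norm_ne_zero_iff.2 (sub_ne_zero.2 hx))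
  have hdet : ∀ x : E (n+2), x ≠ xbar →
      |LinearMap.det ((fderiv ℝ ψ x).toLinearMap)|
        = (lam ^ 2 / ‖x - xbar‖ ^ 2) ^ (n + 2) := by
    intro x hx
    rw [(hDψ x hx).fderiv, CLLaux.det_comp_refl (n+2) O hOdet _ _]
    rw [abs_of_nonneg (by positivity), div_pow, sq_abs, dist_eq_norm]
  have hvψ : ∀ x : E (n+2), x ≠ xbar →
      vψ x = v (ψ x) + (Real.log (lam ^ 2) - Real.log (‖x - xbar‖ ^ 2)) := by
    intro x hx
    show v (ψ x) + (1 / (↑n + 2 : ℝ)) *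
        Real.log |LinearMap.det ((fderiv ℝ ψ x).toLinearMap)| = _
    rw [hdet x hx, Real.log_pow,
      Real.log_div (ne_of_gt hlamsq) (hsub_ne x hx)]
    have hcast : ((n + 2 : ℕ) : ℝ) = (n : ℝ) + 2 := by push_cast; ring
    rw [hcast]
    have h2 : ((n:ℝ) + 2) ≠ 0 := by positivity
    congr 1
    field_simp
  have hψlast : ∀ x : E (n+2), ψ x lst = lam ^ 2 * x lst / ‖x - xbar‖ ^ 2 := by
    intro x
    show (∑ j, O lst j * (lam ^ 2 * (x j - xbar j) / ‖x - xbar‖ ^ 2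
        + lam ^ 2 * xbar j / ‖xbar‖ ^ 2)) = _
    rw [Finset.sum_eq_single lst]
    · rw [hOrow, if_pos rfl, one_mul, hxlast]
      ring
    · intro j _ hj
      rw [hOrow, if_neg hj, zero_mul]
    · intro h; exact absurd (Finset.mem_univ _) h
  have hψzero : ψ 0 = 0 := by
    ext i
    have hnn : ‖(0:E (n+2)) - xbar‖ = ‖xbar‖ := by rw [zero_sub, norm_neg]
    show (∑ j, O i j * (lam ^ 2 * ((0:E (n+2)) j - xbar j) / ‖(0:E (n+2)) - xbar‖ ^ 2
        + lam ^ 2 * xbar j / ‖xbar‖ ^ 2)) = (0:E (n+2)) i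
    rw [hnn]
    have hterm : ∀ j, O i j * (lam ^ 2 * ((0:E (n+2)) j - xbar j) / ‖xbar‖ ^ 2
        + lam ^ 2 * xbar j / ‖xbar‖ ^ 2) = 0 := by
      intro j
      have h0j : (0:E (n+2)) j = 0 := rfl
      rw [h0j]
      ring
    simp only [hterm, Finset.sum_const_zero]
    rfl
  refine ⟨hxbar0, hxlast, hψzero, ?_, ?_⟩
  -- image
  · apply Set.Subset.antisymm
    · rintro _ ⟨x, hx, rfl⟩
      have hxlt : (0:ℝ) < x lst := hx
      have hxne : x ≠ xbar := by
        intro h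
        rw [h, hxlast] at hxlt
        exact lt_irrefl _ hxlt
      have hr : (0:ℝ) < ‖x - xbar‖ ^ 2 :=
        lt_of_le_of_ne (sq_nonneg _) (Ne.symm (hsub_ne x hxne))
      show (0:ℝ) < ψ x (lastIdx n)
      rw [show lastIdx n = lst from rfl, hψlast]
      positivity
    · intro y hy
      have hylt : (0:ℝ) < y lst := hy
      set w : E (n+2) := WithLp.toLp 2 (fun j => (∑ i, O i j * y i) - lam ^ 2 * xbar j / ‖xbar‖ ^ 2)
        with hwdef
      have hwlast : w lst = y lst := by
        show (∑ i, O i lst * y i) - lam ^ 2 * xbar lst / ‖xbar‖ ^ 2 = y lst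
        rw [hxlast]
        rw [Finset.sum_eq_single lst]
        · rw [hOcol, if_pos rfl, one_mul]; ring
        · intro j _ hj
          rw [hOcol, if_neg hj, zero_mul]
        · intro h; exact absurd (Finset.mem_univ _) h
      have hwne : w ≠ 0 := by
        intro h
        rw [h] at hwlast
        have : (0:ℝ) = y lst := hwlast
        rw [← this] at hylt
        exact lt_irrefl _ hylt
      have hwnpos : (0:ℝ) < ‖w‖ ^ 2 :=
        pow_pos (norm_pos_iff.2 hwne) 2
      set x : E (n+2) := WithLp.toLp 2 (fun j => xbar j + lam ^ 2 * w j / ‖w‖ ^ 2) with hxdef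
      have hxsub : x - xbar = (lam ^ 2 / ‖w‖ ^ 2) • w := by
        ext j
        show x j - xbar j = ((lam ^ 2 / ‖w‖ ^ 2) • w) j
        rw [hxdef]
        simp only [PiLp.smul_apply, smul_eq_mul]
        ring
      have hxnorm : ‖x - xbar‖ ^ 2 = lam ^ 4 / ‖w‖ ^ 2 := by
        rw [hxsub, norm_smul, mul_pow, Real.norm_eq_abs, sq_abs, div_pow]
        field_simp
      refine ⟨x, ?_, ?_⟩
      · show (0:ℝ) < x (lastIdx n)
        show (0:ℝ) < xbar lst + lam ^ 2 * w lst / ‖w‖ ^ 2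
        rw [hxlast, hwlast]
        positivity
      · ext i
        show (∑ j, O i j * (lam ^ 2 * (x j - xbar j) / ‖x - xbar‖ ^ 2
            + lam ^ 2 * xbar j / ‖xbar‖ ^ 2)) = y i
        have hterm : ∀ j, lam ^ 2 * (x j - xbar j) / ‖x - xbar‖ ^ 2
            + lam ^ 2 * xbar j / ‖xbar‖ ^ 2 = ∑ k, O k j * y k := by
          intro j
          have hj : x j - xbar j = lam ^ 2 / ‖w‖ ^ 2 * w j := by
            have := congrArg (fun z : E (n+2) => z j) hxsub
            simpa [PiLp.sub_apply, PiLp.smul_apply, smul_eq_mul] using this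
          rw [hj, hxnorm]
          have hwj : w j = (∑ k, O k j * y k) - lam ^ 2 * xbar j / ‖xbar‖ ^ 2 := rfl
          rw [hwj]
          have hlam4 : lam ^ 4 ≠ 0 := by positivity
          field_simp
          ring
        simp only [hterm]
        exact CLLaux.sum_orth_vec (n+2) O hOO y i
  -- gradient
  · intro i
    set C : Set (E (n+2)) := closure (upperH n) with hCdef
    have hC : C = {x : E (n+2) | 0 ≤ x (lastIdx n)} := CLLaux.closure_upperH n
    have h0C : (0 : E (n+2)) ∈ C := by
      rw [hC]
      show (0:ℝ) ≤ (0 : E (n+2)) (lastIdx n)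
      exact le_refl 0
    have h0S : (0 : E (n+2)) ∈ S := ⟨h0C, Metric.mem_ball_self hρ⟩
    set e : E (n+2) := EuclideanSpace.single i.castSucc (1:ℝ) with hedef
    set Dv : E (n+2) →L[ℝ] ℝ := fderivWithin ℝ v S 0 with hDvdef
    have hDv : HasFDerivWithinAt v Dv S 0 :=
      ((hv 0 h0S).differentiableWithinAt one_ne_zero).hasFDerivWithinAt
    set s0 : ℝ := (|lam| / dist (0:E (n+2)) xbar) ^ 2 with hs0def
    have hs0 : s0 = lam ^ 2 / N := by
      rw [hs0def, dist_eq_norm, zero_sub, norm_neg, div_pow, sq_abs]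
    set R0 : E (n+2) →L[ℝ] E (n+2) :=
      (Submodule.reflection (ℝ ∙ ((0:E (n+2)) - xbar))ᗮ : E (n+2) →L[ℝ] E (n+2)) with hR0def
    set D0 : E (n+2) →L[ℝ] E (n+2) := T.comp (s0 • R0) with hD0def
    have hψ0 : HasFDerivAt ψ D0 0 := hDψ 0 h0ne
    -- chain rule
    have hball : Metric.ball (0:E (n+2)) ‖xbar‖ ∩ ψ ⁻¹' Metric.ball 0 ρ ∈ nhds (0:E (n+2)) := by
      apply Filter.inter_mem
      · exact Metric.ball_mem_nhds _ (norm_pos_iff.2 hxbar0)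
      · apply hψ0.continuousAt.preimage_mem_nhds
        rw [hψzero]
        exact Metric.ball_mem_nhds _ hρ
    set s₀ : Set (E (n+2)) :=
      C ∩ (Metric.ball (0:E (n+2)) ‖xbar‖ ∩ ψ ⁻¹' Metric.ball 0 ρ) with hs₀def
    have hs₀mem : s₀ ∈ nhdsWithin (0:E (n+2)) C :=
      Filter.inter_mem self_mem_nhdsWithin (nhdsWithin_le_nhds hball)
    have hmaps : Set.MapsTo ψ s₀ S := by
      rintro x ⟨hxC, hxb, hxρ⟩
      refine ⟨?_, hxρ⟩
      rw [hC] at hxC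
      show ψ x ∈ closure (upperH n)
      rw [CLLaux.closure_upperH n]
      show (0:ℝ) ≤ ψ x (lastIdx n)
      rw [show lastIdx n = lst from rfl, hψlast]
      have hxlstge : (0:ℝ) ≤ x lst := hxC
      have hxne : x ≠ xbar := by
        intro h
        rw [h] at hxb
        rw [Metric.mem_ball, dist_eq_norm, sub_zero] at hxb
        exact lt_irrefl _ hxb
      have hr : (0:ℝ) < ‖x - xbar‖ ^ 2 :=
        lt_of_le_of_ne (sq_nonneg _) (Ne.symm (hsub_ne x hxne))
      positivity
    have hcomp : HasFDerivWithinAt (v ∘ ψ) (Dv.comp D0) s₀ 0 := by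
      refine HasFDerivWithinAt.comp 0 ?_ hψ0.hasFDerivWithinAt hmaps
      rw [hψzero]
      exact hDv
    have hcompC : HasFDerivWithinAt (v ∘ ψ) (Dv.comp D0) C 0 :=
      hcomp.mono_of_mem_nhdsWithin hs₀mem
    -- the log part
    set B : E (n+2) →L[ℝ] ℝ :=
      2 • (innerSL ℝ ((0:E (n+2)) - xbar)).comp (ContinuousLinearMap.id ℝ (E (n+2)))
      with hBdef
    have hB : HasFDerivAt (fun x : E (n+2) => ‖x - xbar‖ ^ 2) B 0 := by
      exact ((hasFDerivAt_id (0:E (n+2))).sub_const xbar).norm_sq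
    set Dh : E (n+2) →L[ℝ] ℝ := -(N⁻¹ • B) with hDhdef
    have hh : HasFDerivAt
        (fun x : E (n+2) => Real.log (lam ^ 2) - Real.log (‖x - xbar‖ ^ 2)) Dh 0 := by
      have h1 : HasDerivAt Real.log (‖(0:E (n+2)) - xbar‖ ^ 2)⁻¹ (‖(0:E (n+2)) - xbar‖ ^ 2) :=
        Real.hasDerivAt_log (hsub_ne 0 h0ne)
      have h2 := h1.comp_hasFDerivAt 0 hB
      have hnw : ‖(0:E (n+2)) - xbar‖ ^ 2 = N := by rw [zero_sub, norm_neg]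
      rw [hnw] at h2
      have h3 := h2.const_sub (Real.log (lam ^ 2))
      rw [hDhdef]
      exact h3
    -- combine
    have hg : HasFDerivWithinAt
        (fun x => v (ψ x) + (Real.log (lam ^ 2) - Real.log (‖x - xbar‖ ^ 2)))
        (Dv.comp D0 + Dh) C 0 := hcompC.add hh.hasFDerivWithinAt
    have hUD : UniqueDiffWithinAt ℝ C 0 := CLLaux.uniqueDiffOn_closure_upperH n 0 h0C
    have hfd : fderivWithin ℝ vψ C 0 = Dv.comp D0 + Dh := by
      have hne : {x : E (n+2) | x ≠ xbar} ∈ nhds (0:E (n+2)) :=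
        (isOpen_ne : IsOpen {x : E (n+2) | x ≠ xbar}).mem_nhds h0ne
      have heq : vψ =ᶠ[nhdsWithin (0:E (n+2)) C]
          (fun x => v (ψ x) + (Real.log (lam ^ 2) - Real.log (‖x - xbar‖ ^ 2))) := by
        filter_upwards [nhdsWithin_le_nhds hne] with x hx
        exact hvψ x hx
      rw [heq.fderivWithin_eq (hvψ 0 h0ne)]
      exact hg.fderivWithin hUD
    rw [hfd]
    set X : ℝ := xbar i.castSucc with hXdef
    -- evaluate D0 at e
    have hic_ne : (i.castSucc : Fin (n+2)) ≠ lst := (Fin.castSucc_lt_last i).ne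
    have hinner : (inner ℝ ((0:E (n+2)) - xbar) e : ℝ) = -X := by
      rw [hedef]
      have h1 : (inner ℝ ((0:E (n+2)) - xbar) (EuclideanSpace.single i.castSucc (1:ℝ)) : ℝ)
          = ((0:E (n+2)) - xbar) i.castSucc := by
        simp [EuclideanSpace.inner_single_right]
      rw [h1]
      show (0:E (n+2)) i.castSucc - xbar i.castSucc = -X
      rw [hXdef]
      show (0:ℝ) - xbar i.castSucc = -(xbar i.castSucc)
      ring
    have hnw : ‖(0:E (n+2)) - xbar‖ ^ 2 = N := by rw [zero_sub, norm_neg]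
    have hR0e : R0 e = e - ((2 * (-X) / N) • ((0:E (n+2)) - xbar)) := by
      have h := CLLaux.reflection_hyperplane (n+2) ((0:E (n+2)) - xbar) e
      rw [hinner, hnw] at h
      exact h
    have hD0e : D0 e = s0 • (T e + (2 * (-X) / N) • T xbar) := by
      rw [hD0def, ContinuousLinearMap.comp_apply, ContinuousLinearMap.smul_apply,
        T.map_smul, hR0e]
      congr 1
      rw [T.map_sub, T.map_smul, T.map_sub, T.map_zero, zero_sub, smul_neg, sub_neg_eq_add]
    -- values of Dv
    have hTe_k : ∀ k, T e k = O k i.castSucc := by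
      intro k
      rw [hT]
      rw [hedef]
      simp [EuclideanSpace.single_apply, mul_ite]
    have hDvsingle : ∀ k, k ≠ lst → Dv (EuclideanSpace.single k (1:ℝ)) = qe k := by
      intro k hk
      show Dv (EuclideanSpace.single k (1:ℝ))
        = if k = Fin.last (n+1) then 0 else pd (n+2) S v k 0
      rw [if_neg hk]
      rfl
    have hDvTe : Dv (T e) = 2 / lam ^ 2 * X := by
      rw [CLLaux.clm_eval_sum _ Dv (T e)]
      have hterm : ∀ k, T e k * Dv (EuclideanSpace.single k 1) = O k i.castSucc * qe k := by
        intro k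
        by_cases hk : k = lst
        · subst hk
          rw [hTe_k, hOrow, if_neg hic_ne, zero_mul, zero_mul]
        · rw [hTe_k, hDvsingle k hk]
      rw [Finset.sum_congr rfl fun k _ => hterm k]
      have hXval : X = lam ^ 2 / 2 * ∑ k, O k i.castSucc * qe k := rfl
      rw [hXval]
      field_simp
    have hTxbar_k : ∀ k, T xbar k = lam ^ 2 / 2 * qe k := by
      intro k
      rw [hT]
      have hterm : ∀ j, O k j * xbar j = lam ^ 2 / 2 * (O k j * ∑ l, O l j * qe l) := by
        intro j
        have hxj : xbar j = lam ^ 2 / 2 * ∑ l, O l j * qe l := rfl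
        rw [hxj]
        ring
      rw [Finset.sum_congr rfl fun j _ => hterm j, ← Finset.mul_sum,
        CLLaux.sum_orth_vec (n+2) O hOO qe k]
    have hDvTxbar : Dv (T xbar) = lam ^ 2 / 2 * Q := by
      rw [CLLaux.clm_eval_sum _ Dv (T xbar)]
      have hterm : ∀ k, T xbar k * Dv (EuclideanSpace.single k 1)
          = lam ^ 2 / 2 * qe k ^ 2 := by
        intro k
        by_cases hk : k = lst
        · subst hk
          rw [hTxbar_k, hqlast]
          ring
        · rw [hTxbar_k, hDvsingle k hk]
          ring
      rw [Finset.sum_congr rfl fun k _ => hterm k, ← Finset.mul_sum]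
    have hDvD0e : Dv (D0 e) = s0 * (Dv (T e) + (2 * (-X) / N) * Dv (T xbar)) := by
      rw [hD0e, Dv.map_smul, Dv.map_add, Dv.map_smul, smul_eq_mul, smul_eq_mul]
    -- evaluate Dh at e
    have hBe : B e = 2 * (-X) := by
      rw [hBdef]
      rw [ContinuousLinearMap.smul_apply, ContinuousLinearMap.comp_apply,
        ContinuousLinearMap.id_apply, innerSL_apply_apply, hinner]
      simp
    have hDhe : Dh e = 2 * X / N := by
      rw [hDhdef, ContinuousLinearMap.neg_apply, ContinuousLinearMap.smul_apply, hBe,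
        smul_eq_mul]
      field_simp
    -- final computation
    rw [ContinuousLinearMap.add_apply, ContinuousLinearMap.comp_apply, hDvD0e, hDvTe,
      hDvTxbar, hDhe, hs0, hNval]
    have hl4 : lam ^ 4 ≠ 0 := by positivity
    field_simp
    ring
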